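/- With $U$ and the entropy-maximizing weights $p_k(x)$ as above on the interior $P^o$ of a polytope with vertices $a_1,\dots,a_n$, the functions $p_1,\dots,p_n$ are continuous on $P^o$. -/

import Mathlib

open Finset

/-- The entropy function of a polytope with vertices `a 1, …, a n`:
`U(x) = sup { ∑ᵢ ln pᵢ : pᵢ > 0, ∑ pᵢ = 1, ∑ pᵢ aᵢ = x }`. -/
noncomputable def entropyU {d n : ℕ} (a : Fin n → EuclideanSpace ℝ (Fin d))
    (x : EuclideanSpace ℝ (Fin d)) : ℝ :=
  sSup {s | ∃ p : Fin n → ℝ, (∀ i, 0 < p i) ∧ ∑ i, p i = 1 ∧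
    ∑ i, p i • a i = x ∧ s = ∑ i, Real.log (p i)}

section Aux

open Filter Topology

variable {d n : ℕ} {a : Fin n → EuclideanSpace ℝ (Fin d)}

/-- The defining set of `entropyU` is bounded above by `0`. -/
lemma entropyU_bddAbove (a : Fin n → EuclideanSpace ℝ (Fin d))
    (x : EuclideanSpace ℝ (Fin d)) :
    BddAbove {s | ∃ p : Fin n → ℝ, (∀ i, 0 < p i) ∧ ∑ i, p i = 1 ∧
      ∑ i, p i • a i = x ∧ s = ∑ i, Real.log (p i)} := by
  refine ⟨0, ?_⟩
  rintro s ⟨q, hq, hq1, -, rfl⟩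
  refine Finset.sum_nonpos fun i _ => Real.log_nonpos (hq i).le ?_
  calc q i ≤ ∑ j, q j := Finset.single_le_sum (fun j _ => (hq j).le) (mem_univ i)
  _ = 1 := hq1

lemma le_entropyU (q : Fin n → ℝ) (x : EuclideanSpace ℝ (Fin d))
    (h1 : ∀ i, 0 < q i) (h2 : ∑ i, q i = 1) (h3 : ∑ i, q i • a i = x) :
    ∑ i, Real.log (q i) ≤ entropyU a x :=
  le_csSup (entropyU_bddAbove a x) ⟨q, h1, h2, h3, rfl⟩

/-- If the affine span of the `a i` is everything, there is a linear map `δ` producing,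
for every `y`, weights summing to `0` with barycenter `y`. -/
lemma exists_delta (hspan : affineSpan ℝ (Set.range a) = ⊤) :
    ∃ δ : EuclideanSpace ℝ (Fin d) →ₗ[ℝ] (Fin n → ℝ),
      (∀ y, ∑ i, δ y i = 0) ∧ (∀ y, ∑ i, δ y i • a i = y) := by
  have hcomb : ∀ z : EuclideanSpace ℝ (Fin d),
      ∃ w : Fin n → ℝ, ∑ i, w i = 1 ∧ ∑ i, w i • a i = z := by
    intro z
    have hz : z ∈ affineSpan ℝ (Set.range a) := hspan ▸ AffineSubspace.mem_top ℝ _ z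
    obtain ⟨w, hw, hz'⟩ := eq_affineCombination_of_mem_affineSpan_of_fintype hz
    exact ⟨w, hw, by rw [hz', Finset.affineCombination_eq_linear_combination _ _ _ hw]⟩
  let T : (Fin n → ℝ) →ₗ[ℝ] (EuclideanSpace ℝ (Fin d)) × ℝ :=
    { toFun := fun w => (∑ i, w i • a i, ∑ i, w i)
      map_add' := by
        intro w v
        simp [add_smul, Finset.sum_add_distrib, Prod.ext_iff]
      map_smul' := by
        intro c w
        simp [mul_smul, Finset.smul_sum, Finset.mul_sum, Prod.ext_iff] }
  have hT : LinearMap.range T = ⊤ := by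
    rw [LinearMap.range_eq_top]
    rintro ⟨y, c⟩
    obtain ⟨w, hw1, hwa⟩ := hcomb y
    obtain ⟨u, hu1, hua⟩ := hcomb 0
    refine ⟨w + (c - 1) • u, ?_⟩
    have h1 : ∑ i, (w i + (c - 1) * u i) • a i = y := by
      simp only [add_smul, Finset.sum_add_distrib, mul_smul]
      rw [hwa, ← Finset.smul_sum, hua, smul_zero, add_zero]
    have h2 : ∑ i, (w i + (c - 1) * u i) = c := by
      rw [Finset.sum_add_distrib, hw1, ← Finset.mul_sum, hu1]
      ring
    refine Prod.ext ?_ ?_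
    · simpa [T] using h1
    · simpa [T] using h2
  obtain ⟨S, hS⟩ := T.exists_rightInverse_of_surjective hT
  refine ⟨S.comp (LinearMap.inl ℝ _ ℝ), fun y => ?_, fun y => ?_⟩
  · have := LinearMap.ext_iff.1 hS (y, 0)
    have h2 := congrArg Prod.snd this
    simpa [T] using h2
  · have := LinearMap.ext_iff.1 hS (y, 0)
    have h1 := congrArg Prod.fst this
    simpa [T] using h1

end Aux

/-- The entropy-maximizing weights `p k` are continuous on the interior of `P`. -/
theorem stmt_7 {d n : ℕ} (hn : 2 ≤ n) (a : Fin n → EuclideanSpace ℝ (Fin d))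
    (ha : Function.Injective a)
    (P : Set (EuclideanSpace ℝ (Fin d)))
    (hP : P = convexHull ℝ (Set.range a))
    (hvert : ∀ i, a i ∈ Set.extremePoints ℝ P)
    (hint : (interior P).Nonempty)
    (p : EuclideanSpace ℝ (Fin d) → Fin n → ℝ)
    (hp : ∀ x ∈ interior P, (∀ i, 0 < p x i) ∧ ∑ i, p x i = 1 ∧
      ∑ i, p x i • a i = x ∧ ∑ i, Real.log (p x i) = entropyU a x) :
    ∀ k, ContinuousOn (fun x => p x k) (interior P) := by
  classical
  open Filter Topology in
  have hspan : affineSpan ℝ (Set.range a) = ⊤ :=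
    affineSpan_eq_top_of_nonempty_interior (hP ▸ hint)
  obtain ⟨δ, hδ0, hδa⟩ := exists_delta hspan
  have hδc : Continuous δ := δ.continuous_of_finiteDimensional
  -- Main claim: uniqueness of limits of maximizers.
  have core : ∀ x ∈ interior P, ∀ w : ℕ → EuclideanSpace ℝ (Fin d),
      (∀ m, w m ∈ interior P) → Filter.Tendsto w Filter.atTop (nhds x) →
      ∀ L : Fin n → ℝ, Filter.Tendsto (fun m => p (w m)) Filter.atTop (nhds L) →
      L = p x := by
    intro x hx w hw hwx L hL
    obtain ⟨hpos, hsum, hbary, hval⟩ := hp x hx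
    have hLi : ∀ i, Filter.Tendsto (fun m => p (w m) i) Filter.atTop (nhds (L i)) :=
      fun i => ((continuous_apply i).tendsto L).comp hL
    have hL0 : ∀ i, 0 ≤ L i := fun i =>
      le_of_tendsto_of_tendsto' tendsto_const_nhds (hLi i)
        (fun m => ((hp (w m) (hw m)).1 i).le)
    have hLsum : ∑ i, L i = 1 := by
      have h1 : Filter.Tendsto (fun m => ∑ i, p (w m) i) Filter.atTop (nhds (∑ i, L i)) :=
        tendsto_finset_sum _ fun i _ => hLi i
      have h2 : Filter.Tendsto (fun m => ∑ i, p (w m) i) Filter.atTop (nhds 1) := by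
        simpa using tendsto_const_nhds.congr
          (fun m => ((hp (w m) (hw m)).2.1).symm)
      exact tendsto_nhds_unique h1 h2
    have hLbary : ∑ i, L i • a i = x := by
      have h1 : Filter.Tendsto (fun m => ∑ i, p (w m) i • a i) Filter.atTop
          (nhds (∑ i, L i • a i)) :=
        tendsto_finset_sum _ fun i _ => (hLi i).smul_const (a i)
      have h2 : Filter.Tendsto (fun m => ∑ i, p (w m) i • a i) Filter.atTop (nhds x) :=
        hwx.congr (fun m => ((hp (w m) (hw m)).2.2.1).symm)
      exact tendsto_nhds_unique h1 h2
    -- the perturbed feasible weights for `w m`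
    set g : ℕ → ℝ := fun m => ∑ i, Real.log (p x i + δ (w m - x) i) with hg
    have hδlim : ∀ i, Filter.Tendsto (fun m => δ (w m - x) i) Filter.atTop (nhds 0) := by
      intro i
      have h1 : Filter.Tendsto (fun m => w m - x) Filter.atTop (nhds 0) := by
        have h0 := hwx.sub (tendsto_const_nhds : Filter.Tendsto (fun _ : ℕ => x) Filter.atTop (nhds x))
        simpa using h0
      have h2 : Filter.Tendsto (fun m => δ (w m - x)) Filter.atTop (nhds (δ 0)) :=
        (hδc.tendsto 0).comp h1
      rw [map_zero] at h2
      exact ((continuous_apply i).tendsto 0).comp h2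
    have hglim : Filter.Tendsto g Filter.atTop (nhds (entropyU a x)) := by
      rw [← hval]
      refine tendsto_finset_sum _ fun i _ => ?_
      have h1 : Filter.Tendsto (fun m => p x i + δ (w m - x) i) Filter.atTop
          (nhds (p x i)) := by
        simpa using tendsto_const_nhds.add (hδlim i)
      exact (Real.continuousAt_log (ne_of_gt (hpos i))).tendsto.comp h1
    have hposev : ∀ᶠ m in Filter.atTop, ∀ i, 0 < p x i + δ (w m - x) i := by
      rw [Filter.eventually_all]
      intro i
      have := (hδlim i).eventually (eventually_gt_nhds (neg_lt_zero.2 (hpos i)))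
      filter_upwards [this] with m hm
      linarith
    have hgle : ∀ᶠ m in Filter.atTop, g m ≤ ∑ i, Real.log (p (w m) i) := by
      filter_upwards [hposev] with m hm
      have hfeas : ∑ i, (p x i + δ (w m - x) i) = 1 := by
        rw [Finset.sum_add_distrib, hsum, hδ0, add_zero]
      have hfeas2 : ∑ i, (p x i + δ (w m - x) i) • a i = w m := by
        simp only [add_smul, Finset.sum_add_distrib]
        rw [hbary, hδa]
        abel
      have := le_entropyU (a := a) (fun i => p x i + δ (w m - x) i) (w m) hm hfeas hfeas2
      rw [← (hp (w m) (hw m)).2.2.2] at this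
      exact this
    -- positivity of the limit weights
    have hLpos : ∀ i, 0 < L i := by
      intro j
      rcases lt_or_eq_of_le (hL0 j) with h | h
      · exact h
      exfalso
      have hj0 : Filter.Tendsto (fun m => p (w m) j) Filter.atTop (nhds 0) := by
        simpa [← h] using hLi j
      have hj0' : Filter.Tendsto (fun m => p (w m) j) Filter.atTop (nhdsWithin 0 (Set.Ioi 0)) :=
        tendsto_nhdsWithin_of_tendsto_nhds_of_eventually_within _ hj0
          (Filter.Eventually.of_forall fun m => (hp (w m) (hw m)).1 j)
      have hlogbot : Filter.Tendsto (fun m => Real.log (p (w m) j)) Filter.atTop Filter.atBot :=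
        Real.tendsto_log_nhdsGT_zero.comp hj0'
      have hsumle : ∀ m, ∑ i, Real.log (p (w m) i) ≤ Real.log (p (w m) j) := by
        intro m
        have h1 : ∀ i, Real.log (p (w m) i) ≤ 0 := by
          intro i
          refine Real.log_nonpos ((hp (w m) (hw m)).1 i).le ?_
          calc p (w m) i ≤ ∑ l, p (w m) l :=
                Finset.single_le_sum (fun l _ => ((hp (w m) (hw m)).1 l).le) (mem_univ i)
          _ = 1 := (hp (w m) (hw m)).2.1
        calc ∑ i, Real.log (p (w m) i)
            = Real.log (p (w m) j) + ∑ i ∈ univ.erase j, Real.log (p (w m) i) := by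
              rw [add_comm, Finset.sum_erase_add _ _ (mem_univ j)]
          _ ≤ Real.log (p (w m) j) + 0 := by
              gcongr
              exact Finset.sum_nonpos fun i _ => h1 i
          _ = Real.log (p (w m) j) := by ring
      have hbot : Filter.Tendsto (fun m => ∑ i, Real.log (p (w m) i)) Filter.atTop
          Filter.atBot := tendsto_atBot_mono hsumle hlogbot
      have hev1 : ∀ᶠ m in Filter.atTop,
          ∑ i, Real.log (p (w m) i) ≤ entropyU a x - 2 :=
        hbot.eventually (Filter.eventually_le_atBot _)
      have hev2 : ∀ᶠ m in Filter.atTop, entropyU a x - 1 < g m :=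
        hglim.eventually (eventually_gt_nhds (by linarith))
      obtain ⟨m, h1, h2, h3⟩ := (hev1.and (hev2.and hgle)).exists
      linarith
    -- the limit has optimal value
    have hLval : entropyU a x ≤ ∑ i, Real.log (L i) := by
      have h1 : Filter.Tendsto (fun m => ∑ i, Real.log (p (w m) i)) Filter.atTop
          (nhds (∑ i, Real.log (L i))) :=
        tendsto_finset_sum _ fun i _ =>
          (Real.continuousAt_log (ne_of_gt (hLpos i))).tendsto.comp (hLi i)
      exact le_of_tendsto_of_tendsto hglim h1 hgle
    -- strict concavity : uniqueness
    by_contra hne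
    obtain ⟨j, hj⟩ : ∃ j, L j ≠ p x j := by
      by_contra h
      push_neg at h
      exact hne (funext h)
    set r : Fin n → ℝ := fun i => (L i + p x i) / 2 with hr
    have hrpos : ∀ i, 0 < r i := fun i => by
      have := hLpos i; have := hpos i
      simp only [hr]; linarith
    have hrsum : ∑ i, r i = 1 := by
      simp only [hr]
      rw [← Finset.sum_div, Finset.sum_add_distrib, hLsum, hsum]
      norm_num
    have hrbary : ∑ i, r i • a i = x := by
      have : ∀ i, r i • a i = (2:ℝ)⁻¹ • (L i • a i) + (2:ℝ)⁻¹ • (p x i • a i) := by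
        intro i
        rw [← smul_assoc, ← smul_assoc, ← add_smul]
        congr 1
        simp only [hr, smul_eq_mul]
        ring
      rw [Finset.sum_congr rfl fun i _ => this i, Finset.sum_add_distrib,
        ← Finset.smul_sum, ← Finset.smul_sum, hLbary, hbary, ← add_smul]
      norm_num
    have hconc : ∀ i, (Real.log (L i) + Real.log (p x i)) / 2 ≤ Real.log (r i) := by
      intro i
      rcases eq_or_ne (L i) (p x i) with h | h
      · rw [h]
        have : r i = p x i := by simp only [hr, h]; ring
        rw [this]; linarith
      · have := strictConcaveOn_log_Ioi.2 (Set.mem_Ioi.2 (hLpos i))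
          (Set.mem_Ioi.2 (hpos i)) h (by norm_num : (0:ℝ) < 1/2)
          (by norm_num : (0:ℝ) < 1/2) (by norm_num)
        have h2 : (1/2 : ℝ) • L i + (1/2 : ℝ) • p x i = r i := by
          simp only [hr, smul_eq_mul]; ring
        rw [h2] at this
        have h3 : (1/2 : ℝ) • Real.log (L i) + (1/2 : ℝ) • Real.log (p x i)
            = (Real.log (L i) + Real.log (p x i)) / 2 := by
          simp only [smul_eq_mul]; ring
        rw [h3] at this
        exact this.le
    have hconcj : (Real.log (L j) + Real.log (p x j)) / 2 < Real.log (r j) := by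
      have := strictConcaveOn_log_Ioi.2 (Set.mem_Ioi.2 (hLpos j))
        (Set.mem_Ioi.2 (hpos j)) hj (by norm_num : (0:ℝ) < 1/2)
        (by norm_num : (0:ℝ) < 1/2) (by norm_num)
      have h2 : (1/2 : ℝ) • L j + (1/2 : ℝ) • p x j = r j := by
        simp only [hr, smul_eq_mul]; ring
      have h3 : (1/2 : ℝ) • Real.log (L j) + (1/2 : ℝ) • Real.log (p x j)
          = (Real.log (L j) + Real.log (p x j)) / 2 := by
        simp only [smul_eq_mul]; ring
      rw [h2, h3] at this
      exact this
    have hstrict : entropyU a x < ∑ i, Real.log (r i) := by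
      have h1 : ∑ i, (Real.log (L i) + Real.log (p x i)) / 2 < ∑ i, Real.log (r i) :=
        Finset.sum_lt_sum (fun i _ => hconc i) ⟨j, mem_univ j, hconcj⟩
      have h2 : ∑ i, (Real.log (L i) + Real.log (p x i)) / 2
          = (∑ i, Real.log (L i) + ∑ i, Real.log (p x i)) / 2 := by
        rw [← Finset.sum_div, Finset.sum_add_distrib]
      rw [h2, hval] at h1
      calc entropyU a x = (entropyU a x + entropyU a x) / 2 := by ring
      _ ≤ (∑ i, Real.log (L i) + entropyU a x) / 2 := by linarith
      _ < ∑ i, Real.log (r i) := h1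
    exact absurd (le_entropyU r x hrpos hrsum hrbary) (not_le.2 hstrict)
  -- From `core` to continuity via subsequences.
  have main : ∀ x ∈ interior P,
      Filter.Tendsto (fun y => p y) (nhdsWithin x (interior P)) (nhds (p x)) := by
    intro x hx
    apply Filter.tendsto_of_subseq_tendsto
    intro v hv
    have hvP : ∀ᶠ m in Filter.atTop, v m ∈ interior P :=
      hv self_mem_nhdsWithin
    obtain ⟨N, hN⟩ := Filter.eventually_atTop.1 hvP
    set w : ℕ → EuclideanSpace ℝ (Fin d) := fun m => v (m + N) with hwdef
    have hwP : ∀ m, w m ∈ interior P := fun m => hN _ (Nat.le_add_left N m)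
    have hwx : Filter.Tendsto w Filter.atTop (nhds x) := by
      have h1 : Filter.Tendsto v Filter.atTop (nhds x) :=
        hv.mono_right nhdsWithin_le_nhds
      exact h1.comp (Filter.tendsto_add_atTop_nat N)
    have hmem : ∀ m, p (w m) ∈ stdSimplex ℝ (Fin n) := fun m =>
      ⟨fun i => ((hp (w m) (hwP m)).1 i).le, (hp (w m) (hwP m)).2.1⟩
    obtain ⟨L, -, φ, hφ, hLtend⟩ :=
      (isCompact_stdSimplex ℝ (Fin n)).tendsto_subseq hmem
    have hwφP : ∀ m, w (φ m) ∈ interior P := fun m => hwP (φ m)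
    have hwφx : Filter.Tendsto (fun m => w (φ m)) Filter.atTop (nhds x) :=
      hwx.comp hφ.tendsto_atTop
    have hLp : L = p x :=
      core x hx (fun m => w (φ m)) hwφP hwφx L hLtend
    refine ⟨fun m => φ m + N, ?_⟩
    rw [← hLp]
    exact hLtend
  intro k x hx
  have := ((continuous_apply k).tendsto (p x)).comp (main x hx)
  exact this
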